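/- Let n ≥ 1 and let ρ be a 2⊗n density matrix (a positive semidefinite complex matrix indexed by Fin 2 × Fin n with trace 1). Then the partial transpose ρ^{T_A} (which is Hermitian) has at most n − 1 negative eigenvalues, counted with multiplicity. -/

import Mathlib

open Matrix
open scoped ComplexOrder

noncomputable section

/-- Partial transpose with respect to the first (qubit) factor. -/
def ptA {n : ℕ} (ρ : Matrix (Fin 2 × Fin n) (Fin 2 × Fin n) ℂ) :
    Matrix (Fin 2 × Fin n) (Fin 2 × Fin n) ℂ :=
  fun p q => ρ (q.1, p.2) (p.1, q.2)

/-- The quadratic form of the partial transpose is nonnegative on product vectors. -/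
lemma ptA_quad_product {n : ℕ} (ρ : Matrix (Fin 2 × Fin n) (Fin 2 × Fin n) ℂ)
    (hρ : ρ.PosSemidef) (a : Fin 2 → ℂ) (b : Fin n → ℂ) :
    0 ≤ star (fun p : Fin 2 × Fin n => a p.1 * b p.2) ⬝ᵥ
      (ptA ρ).mulVec (fun p : Fin 2 × Fin n => a p.1 * b p.2) := by
  have key :
      star (fun p : Fin 2 × Fin n => a p.1 * b p.2) ⬝ᵥ
        (ptA ρ).mulVec (fun p : Fin 2 × Fin n => a p.1 * b p.2)
      = star (fun p : Fin 2 × Fin n => (starRingEnd ℂ) (a p.1) * b p.2) ⬝ᵥ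
        ρ.mulVec (fun p : Fin 2 × Fin n => (starRingEnd ℂ) (a p.1) * b p.2) := by
    simp only [dotProduct, mulVec, Finset.mul_sum, ptA, Pi.star_apply, star_mul',
      Complex.star_def, Complex.conj_conj]
    rw [← Fintype.sum_prod_type', ← Fintype.sum_prod_type']
    refine Fintype.sum_equiv
      ⟨fun x : (Fin 2 × Fin n) × (Fin 2 × Fin n) => ((x.2.1, x.1.2), (x.1.1, x.2.2)),
       fun x => ((x.2.1, x.1.2), (x.1.1, x.2.2)),
       fun x => rfl, fun x => rfl⟩ _ _ ?_
    rintro ⟨⟨p1, p2⟩, ⟨q1, q2⟩⟩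
    simp only [Equiv.coe_fn_mk]
    ring
  rw [key]
  exact hρ.dotProduct_mulVec_nonneg _

/-- Partial transposition of any `2 ⊗ n` density matrix has at most `n - 1`
negative eigenvalues (counted with multiplicity). -/
theorem pt_neg_eigenvalues_le {n : ℕ} (hn : 1 ≤ n)
    (ρ : Matrix (Fin 2 × Fin n) (Fin 2 × Fin n) ℂ)
    (hρ : ρ.PosSemidef) (htr : ρ.trace = 1)
    (hH : (ptA ρ).IsHermitian) :
    (Finset.univ.filter fun i => hH.eigenvalues i < 0).card ≤ n - 1 := by
  classical
  by_contra hcon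
  push_neg at hcon
  set S : Finset (Fin 2 × Fin n) :=
    Finset.univ.filter (fun i => hH.eigenvalues i < 0) with hSdef
  have hnS : n ≤ S.card := by omega
  set U : Matrix (Fin 2 × Fin n) (Fin 2 × Fin n) ℂ := ↑(hH.eigenvectorUnitary) with hU
  have hUU : star U * U = 1 := hH.eigenvectorUnitary.2.1
  set D : Matrix (Fin 2 × Fin n) (Fin 2 × Fin n) ℂ :=
    Matrix.diagonal (RCLike.ofReal ∘ hH.eigenvalues) with hD
  -- the extension-by-zero linear map
  let ext : (↥S → ℂ) →ₗ[ℂ] ((Fin 2 × Fin n) → ℂ) :=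
    { toFun := fun c p => if h : p ∈ S then c ⟨p, h⟩ else 0
      map_add' := by
        intro c d; funext p; by_cases h : p ∈ S <;> simp [h]
      map_smul' := by
        intro r c; funext p; by_cases h : p ∈ S <;> simp [h] }
  let L : (↥S → ℂ) →ₗ[ℂ] ((Fin 2 × Fin n) → ℂ) := U.mulVecLin ∘ₗ ext
  -- the quadratic form of `ptA ρ` is negative on nonzero elements of the range of `L`
  have hquad : ∀ c : ↥S → ℂ, c ≠ 0 →
      star (L c) ⬝ᵥ (ptA ρ).mulVec (L c) < 0 := by
    intro c hc
    set d : (Fin 2 × Fin n) → ℂ := ext c with hd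
    have hdS : ∀ i : ↥S, d ↑i = c i := fun i => dif_pos i.2
    have hdNS : ∀ p, p ∉ S → d p = 0 := by
      intro p h; simp [hd, ext, h]
    have hLc : L c = U *ᵥ d := rfl
    have key : star (U *ᵥ d) ⬝ᵥ (U * D * star U) *ᵥ (U *ᵥ d)
        = ∑ p, star (d p) * ((RCLike.ofReal (hH.eigenvalues p) : ℂ) * d p) := by
      rw [Matrix.mulVec_mulVec]
      have h2 : U * D * star U * U = U * D := by
        rw [mul_assoc (U * D), hUU, mul_one]
      rw [h2, star_mulVec, dotProduct_mulVec, vecMul_vecMul]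
      have h3 : Uᴴ * (U * D) = D := by
        rw [← mul_assoc, ← Matrix.star_eq_conjTranspose, hUU, one_mul]
      rw [h3, hD]
      simp only [dotProduct, Matrix.vecMul_diagonal, Function.comp, Pi.star_apply]
      exact Finset.sum_congr rfl fun p _ => by ring
    have hst : ptA ρ = U * D * star U := hH.spectral_theorem
    have hform : star (L c) ⬝ᵥ (ptA ρ).mulVec (L c)
        = ∑ p, star (d p) * ((RCLike.ofReal (hH.eigenvalues p) : ℂ) * d p) := by
      rw [hLc]
      conv_lhs => rw [hst]
      exact key
    have hform2 : star (L c) ⬝ᵥ (ptA ρ).mulVec (L c)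
        = ((∑ i ∈ S.attach, hH.eigenvalues ↑i * Complex.normSq (c i) : ℝ) : ℂ) := by
      rw [hform]
      rw [← Finset.sum_subset S.subset_univ (by
        intro p _ hp
        simp [hdNS p hp])]
      rw [← Finset.sum_attach S (fun p => star (d p) * ((RCLike.ofReal (hH.eigenvalues p) : ℂ) * d p))]
      push_cast
      refine Finset.sum_congr rfl fun i _ => ?_
      rw [hdS i]
      have h4 : (RCLike.ofReal (hH.eigenvalues ↑i) : ℂ) = ((hH.eigenvalues ↑i : ℝ) : ℂ) := rfl
      rw [h4, ← Complex.mul_conj]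
      simp only [Pi.star_apply, Complex.star_def]
      ring
    rw [hform2]
    rw [show (0 : ℂ) = ((0 : ℝ) : ℂ) by norm_num, Complex.real_lt_real]
    obtain ⟨j, hj⟩ := Function.ne_iff.mp hc
    have hneg : ∀ i : ↥S, hH.eigenvalues ↑i < 0 := by
      intro i
      exact (Finset.mem_filter.mp i.2).2
    calc ∑ i ∈ S.attach, hH.eigenvalues ↑i * Complex.normSq (c i)
        < ∑ _i ∈ S.attach, (0 : ℝ) := by
          refine Finset.sum_lt_sum (fun i _ => ?_) ⟨j, Finset.mem_attach _ j, ?_⟩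
          · exact mul_nonpos_iff.mpr (Or.inr ⟨(hneg i).le, Complex.normSq_nonneg _⟩)
          · exact mul_neg_of_neg_of_pos (hneg j) (Complex.normSq_pos.mpr hj)
      _ = 0 := by simp
  -- no nonzero product vector in range of L
  have hprod : ∀ (a : Fin 2 → ℂ) (x : Fin n → ℂ) (c : ↥S → ℂ),
      (L c = fun p : Fin 2 × Fin n => a p.1 * x p.2) → c = 0 := by
    intro a x c hLc
    by_contra h0
    have h1 := hquad c h0
    rw [hLc] at h1
    exact absurd (ptA_quad_product ρ hρ a x) h1.not_ge
  -- first and second row extraction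
  let π1 : ((Fin 2 × Fin n) → ℂ) →ₗ[ℂ] (Fin n → ℂ) :=
    LinearMap.funLeft ℂ ℂ (fun j => ((0 : Fin 2), j))
  let π2 : ((Fin 2 × Fin n) → ℂ) →ₗ[ℂ] (Fin n → ℂ) :=
    LinearMap.funLeft ℂ ℂ (fun j => ((1 : Fin 2), j))
  let Φ : (↥S → ℂ) →ₗ[ℂ] (Fin n → ℂ) := π1 ∘ₗ L
  have hΦinj : Function.Injective Φ := by
    rw [← LinearMap.ker_eq_bot, LinearMap.ker_eq_bot']
    intro c hc
    refine hprod ![0, 1] (fun j => L c (1, j)) c ?_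
    funext p
    obtain ⟨i, j⟩ := p
    have h0 : L c (0, j) = 0 := congrFun hc j
    fin_cases i
    · simpa using h0
    · simp
  have hcard_le : S.card ≤ n := by
    have h1 := LinearMap.finrank_le_finrank_of_injective hΦinj
    simpa [Module.finrank_fintype_fun_eq_card, Fintype.card_coe] using h1
  have hcard : Module.finrank ℂ (↥S → ℂ) = Module.finrank ℂ (Fin n → ℂ) := by
    simp only [Module.finrank_fintype_fun_eq_card, Fintype.card_coe, Fintype.card_fin]
    omega
  let e := Φ.linearEquivOfInjective hΦinj hcard
  haveI : Nonempty (Fin n) := ⟨⟨0, hn⟩⟩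
  obtain ⟨μ, hμ⟩ := Module.End.exists_eigenvalue
    ((π2 ∘ₗ L) ∘ₗ (e.symm : (Fin n → ℂ) →ₗ[ℂ] (↥S → ℂ)))
  obtain ⟨x, hx⟩ := hμ.exists_hasEigenvector
  have hxe : (π2 ∘ₗ L) (e.symm x) = μ • x := hx.apply_eq_smul
  have hΦx : Φ (e.symm x) = x := by
    have h := e.apply_symm_apply x
    rwa [show e (e.symm x) = Φ (e.symm x) from
      Φ.linearEquivOfInjective_apply hΦinj hcard _] at h
  have hLce : L (e.symm x) = fun p : Fin 2 × Fin n => (![1, μ]) p.1 * x p.2 := by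
    funext p
    obtain ⟨i, j⟩ := p
    fin_cases i
    · have h := congrFun hΦx j
      simpa [Φ, π1] using h
    · have h := congrFun hxe j
      simpa [π2] using h
  have hc0 : e.symm x = 0 := hprod ![1, μ] x _ hLce
  have hx0 : x = 0 := by
    have h := hΦx
    rw [hc0, map_zero] at h
    exact h.symm
  exact hx.2 hx0
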